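/- Let Γ = (V,R) be a graph and let S = ker(ξ_Γ), the product of the p-Sylow and q-Sylow subgroups of G_Γ. If N is a proper closed normal subgroup of G_Γ, then NS is also a proper normal subgroup of G_Γ. -/

import Mathlib

open Function

noncomputable section

/-- A discrete group is a topological group. -/
instance (priority := 50) discreteTopologicalGroup (G : Type*) [Group G] [TopologicalSpace G]
    [DiscreteTopology G] : IsTopologicalGroup G where
  continuous_mul := continuous_of_discreteTopology
  continuous_inv := continuous_of_discreteTopology

/-- The sign epimorphism `τ : D_p → C_2 = {±1}` killing the rotations. -/
def dihedralSign (p : ℕ) : DihedralGroup p →* ℤˣ where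
  toFun x := match x with
    | DihedralGroup.r _ => 1
    | DihedralGroup.sr _ => -1
  map_one' := rfl
  map_mul' a b := by cases a <;> cases b <;> rfl

/-- `{±1}` acts on a commutative group by exponentiation (i.e. `-1` acts by inversion). -/
def unitsIntAut (A : Type*) [CommGroup A] : ℤˣ →* MulAut A where
  toFun u :=
    { toFun := fun x => x ^ (u : ℤ)
      invFun := fun x => x ^ (u : ℤ)
      left_inv := fun x => by rcases Int.units_eq_one_or u with h | h <;> simp [h]
      right_inv := fun x => by rcases Int.units_eq_one_or u with h | h <;> simp [h]
      map_mul' := fun x y => mul_zpow x y _ }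
  map_one' := by ext x; simp
  map_mul' u v := by
    ext x
    rcases Int.units_eq_one_or u with h | h <;>
      rcases Int.units_eq_one_or v with h' | h' <;>
        simp [h, h']

/-- The action of `D_p × D_p` on `C_q` given by `(x,y) · g = g^(τ(x)τ(y))`. -/
def Wact (p q : ℕ) : DihedralGroup p × DihedralGroup p →* MulAut (Multiplicative (ZMod q)) :=
  (unitsIntAut (Multiplicative (ZMod q))).comp
    (((dihedralSign p).comp (MonoidHom.fst _ _)) * ((dihedralSign p).comp (MonoidHom.snd _ _)))

/-- The group `W = C_q ⋊ (D_p × D_p)`. -/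
abbrev Wgrp (p q : ℕ) : Type :=
  SemidirectProduct (Multiplicative (ZMod q)) (DihedralGroup p × DihedralGroup p) (Wact p q)

/-- The quotient map `λ : W → D_p × D_p`. -/
abbrev lamW (p q : ℕ) : Wgrp p q →* DihedralGroup p × DihedralGroup p :=
  SemidirectProduct.rightHom

/-- The group `G_Γ ≤ D_p^V × W^R` associated to a graph `Γ = (V, R)`. -/
def GGamma (p q : ℕ) (V : Type*) (R : Set (V × V)) :
    Subgroup ((V → DihedralGroup p) × (R → Wgrp p q)) where
  carrier := {x | ∀ r : R,
    SemidirectProduct.rightHom (x.2 r) = (x.1 (r : V × V).1, x.1 (r : V × V).2)}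
  one_mem' := by intro r; simp <;> rfl
  mul_mem' := by
    intro a b ha hb r
    simp only [Set.mem_setOf_eq] at ha hb
    simp only [Prod.snd_mul, Pi.mul_apply, map_mul, Prod.fst_mul, ha r, hb r, Prod.mk_mul_mk]
  inv_mem' := by
    intro a ha r
    simp only [Set.mem_setOf_eq] at ha
    simp only [Prod.snd_inv, Pi.inv_apply, map_inv, Prod.fst_inv, ha r, Prod.inv_mk]

instance (n : ℕ) : TopologicalSpace (DihedralGroup n) := ⊥
instance (n : ℕ) : DiscreteTopology (DihedralGroup n) := ⟨rfl⟩
instance (p q : ℕ) : TopologicalSpace (Wgrp p q) := ⊥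
instance (p q : ℕ) : DiscreteTopology (Wgrp p q) := ⟨rfl⟩

variable (p q : ℕ) (V : Type*) (R : Set (V × V))

/-- The coordinate projection `π_v : G_Γ → D_p` at a vertex `v`. -/
def vProj (v : V) : ↥(GGamma p q V R) →* DihedralGroup p :=
  (Pi.evalMonoidHom (fun _ : V => DihedralGroup p) v).comp
    ((MonoidHom.fst _ _).comp (GGamma p q V R).subtype)

/-- The coordinate projection `π_r : G_Γ → W` at an edge `r`. -/
def eProj (r : R) : ↥(GGamma p q V R) →* Wgrp p q :=
  (Pi.evalMonoidHom (fun _ : R => Wgrp p q) r).comp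
    ((MonoidHom.snd _ _).comp (GGamma p q V R).subtype)

variable (I : Type*)

/-- The coordinate projection `π_v : G_Γ × C_2^I → D_p` at a vertex `v`. -/
def vProjK (v : V) : (↥(GGamma p q V R) × (I → ℤˣ)) →* DihedralGroup p :=
  (vProj p q V R v).comp (MonoidHom.fst _ _)

/-- The coordinate projection `π_r : G_Γ × C_2^I → W` at an edge `r`. -/
def eProjK (r : R) : (↥(GGamma p q V R) × (I → ℤˣ)) →* Wgrp p q :=
  (eProj p q V R r).comp (MonoidHom.fst _ _)

/-- The map `ξ_Γ : G_Γ → C_2^V`, `((a_v), (b_r)) ↦ (τ(a_v))_v`. -/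
def xiGamma : ↥(GGamma p q V R) →* (V → ℤˣ) :=
  Pi.monoidHom fun v => (dihedralSign p).comp (vProj p q V R v)

end
section Aux
open DihedralGroup SemidirectProduct

variable {p q : ℕ} {V : Type} {R : Set (V × V)}

/-- dihedralSign of a rotation. -/
lemma sign_r (i : ZMod p) : dihedralSign p (r i) = 1 := rfl
lemma sign_sr (i : ZMod p) : dihedralSign p (sr i) = -1 := rfl

lemma rot_of_sign_one {x : DihedralGroup p} (h : dihedralSign p x = 1) : ∃ k, x = r k := by
  cases x with
  | r k => exact ⟨k, rfl⟩
  | sr k => rw [sign_sr] at h; exact absurd h (by decide)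

/-- Wact on a pair of rotations is trivial. -/
lemma Wact_rot (i j : ZMod p) (c : Multiplicative (ZMod q)) :
    Wact p q (r i, r j) c = c := by
  show c ^ (((dihedralSign p (r i) * dihedralSign p (r j) : ℤˣ)) : ℤ) = c
  simp [sign_r]

lemma Wact_srone (i : ZMod p) (c : Multiplicative (ZMod q)) :
    Wact p q (sr i, 1) c = c⁻¹ := by
  show c ^ (((dihedralSign p (sr i) * dihedralSign p (1 : DihedralGroup p) : ℤˣ)) : ℤ) = c⁻¹
  have : dihedralSign p (1 : DihedralGroup p) = 1 := map_one _
  simp [sign_sr, this]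

lemma W_eq_inl {w : Wgrp p q} (h : w.right = 1) : w = inl w.left := by
  apply SemidirectProduct.ext
  · simp
  · simp [h]

end Aux
section Aux2
open SemidirectProduct

variable {p q : ℕ} {V : Type} {R : Set (V × V)}

/-- Vertex coordinate of an element of `G_Γ`. -/
def cV (x : ↥(GGamma p q V R)) (v : V) : DihedralGroup p := x.1.1 v

/-- Edge coordinate of an element of `G_Γ`. -/
def cE (x : ↥(GGamma p q V R)) (r : R) : Wgrp p q := x.1.2 r

lemma cV_mul (x y : ↥(GGamma p q V R)) (v : V) : cV (x * y) v = cV x v * cV y v := rfl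
lemma cE_mul (x y : ↥(GGamma p q V R)) (r : R) : cE (x * y) r = cE x r * cE y r := rfl
lemma cV_inv (x : ↥(GGamma p q V R)) (v : V) : cV x⁻¹ v = (cV x v)⁻¹ := rfl
lemma cE_inv (x : ↥(GGamma p q V R)) (r : R) : cE x⁻¹ r = (cE x r)⁻¹ := rfl
lemma cV_one (v : V) : cV (1 : ↥(GGamma p q V R)) v = 1 := rfl
lemma cE_one (r : R) : cE (1 : ↥(GGamma p q V R)) r = 1 := rfl

lemma GG_ext {x y : ↥(GGamma p q V R)} (h1 : ∀ v, cV x v = cV y v)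
    (h2 : ∀ r, cE x r = cE y r) : x = y := by
  apply Subtype.ext
  exact Prod.ext (funext h1) (funext h2)

lemma mem_GG (x : ↥(GGamma p q V R)) (r : R) :
    (cE x r).right = (cV x (r : V × V).1, cV x (r : V × V).2) := x.2 r

/-- Lift a vertex assignment to an element of `G_Γ`. -/
def glift (a : V → DihedralGroup p) : ↥(GGamma p q V R) :=
  ⟨(a, fun r => inr (a (r : V × V).1, a (r : V × V).2)), fun r => by
    simp [rightHom_inr]⟩

lemma cV_glift (a : V → DihedralGroup p) (v : V) : cV (glift (R := R) (q := q) a) v = a v := rfl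
lemma cE_glift (a : V → DihedralGroup p) (r : R) :
    cE (glift (q := q) a) r = inr (a (r : V × V).1, a (r : V × V).2) := rfl

lemma mem_ker_xi {s : ↥(GGamma p q V R)} :
    s ∈ (xiGamma p q V R).ker ↔ ∀ v : V, dihedralSign p (cV s v) = 1 := by
  rw [MonoidHom.mem_ker, funext_iff]
  rfl

lemma ker_xi_comm {s t : ↥(GGamma p q V R)} (hs : s ∈ (xiGamma p q V R).ker)
    (ht : t ∈ (xiGamma p q V R).ker) : s * t = t * s := by
  rw [mem_ker_xi] at hs ht
  apply GG_ext
  · intro v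
    obtain ⟨a, ha⟩ := rot_of_sign_one (hs v)
    obtain ⟨b, hb⟩ := rot_of_sign_one (ht v)
    rw [cV_mul, cV_mul, ha, hb, DihedralGroup.r_mul_r, DihedralGroup.r_mul_r, add_comm]
  · intro r
    obtain ⟨a, ha⟩ := rot_of_sign_one (hs (r : V × V).1)
    obtain ⟨b, hb⟩ := rot_of_sign_one (hs (r : V × V).2)
    obtain ⟨a', ha'⟩ := rot_of_sign_one (ht (r : V × V).1)
    obtain ⟨b', hb'⟩ := rot_of_sign_one (ht (r : V × V).2)
    have hrs : (cE s r).right = (DihedralGroup.r a, DihedralGroup.r b) := by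
      rw [mem_GG, ha, hb]
    have hrt : (cE t r).right = (DihedralGroup.r a', DihedralGroup.r b') := by
      rw [mem_GG, ha', hb']
    rw [cE_mul, cE_mul]
    apply SemidirectProduct.ext
    · rw [mul_left, mul_left, hrs, hrt, Wact_rot, Wact_rot, mul_comm]
    · simp only [mul_right, hrs, hrt, Prod.mk_mul_mk, DihedralGroup.r_mul_r]
      rw [add_comm a a', add_comm b b']

end Aux2
section Aux3
open SemidirectProduct

variable {p q : ℕ} {V : Type} {R : Set (V × V)}

lemma odd_mem {H : Type*} [Group H] (M : Subgroup H) {x : H} {n : ℕ} (hn : Odd n)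
    (h2 : x * x ∈ M) (h1 : x ^ n = 1) : x ∈ M := by
  obtain ⟨k, hk⟩ := hn
  have hx : x = x ^ n * ((x * x) ^ k)⁻¹ := by
    subst hk
    rw [← pow_two, ← pow_mul, pow_succ', mul_inv_cancel_right]
  rw [hx, h1, one_mul]
  exact inv_mem (pow_mem h2 k)

lemma conj_comm_mem {H : Type*} [Group H] (M : Subgroup H)
    (hcomm : ∀ x y : H, x * y * x⁻¹ * y⁻¹ ∈ M) {g x : H} (hconj : g * x * g⁻¹ = x⁻¹) :
    x * x ∈ M := by
  have h := hcomm g x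
  rw [hconj] at h
  have h' := inv_mem h
  rwa [mul_inv_rev, inv_inv] at h'

/-- The cylinder subgroup: coordinates on `FV` and `FR` trivial. -/
def cylSub (FV : Finset V) (FR : Finset R) : Subgroup ↥(GGamma p q V R) where
  carrier := {x | (∀ v ∈ FV, cV x v = 1) ∧ ∀ r ∈ FR, cE x r = 1}
  one_mem' := ⟨fun v _ => rfl, fun r _ => rfl⟩
  mul_mem' := by
    rintro a b ⟨ha1, ha2⟩ ⟨hb1, hb2⟩
    exact ⟨fun v hv => by rw [cV_mul, ha1 v hv, hb1 v hv, one_mul],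
      fun r hr => by rw [cE_mul, ha2 r hr, hb2 r hr, one_mul]⟩
  inv_mem' := by
    rintro a ⟨ha1, ha2⟩
    exact ⟨fun v hv => by rw [cV_inv, ha1 v hv, inv_one],
      fun r hr => by rw [cE_inv, ha2 r hr, inv_one]⟩

instance cylSub_normal (FV : Finset V) (FR : Finset R) :
    (cylSub (p := p) (q := q) FV FR).Normal := by
  constructor
  rintro x ⟨h1, h2⟩ g
  constructor
  · intro v hv
    rw [cV_mul, cV_mul, h1 v hv, mul_one, cV_inv, mul_inv_cancel]
  · intro r hr
    rw [cE_mul, cE_mul, h2 r hr, mul_one, cE_inv, mul_inv_cancel]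

end Aux3
section Aux4
open SemidirectProduct
open scoped Classical

variable {p q : ℕ} {V : Type} {R : Set (V × V)}

lemma inv_sr0 : (DihedralGroup.sr (0 : ZMod p))⁻¹ = DihedralGroup.sr 0 :=
  inv_eq_of_mul_eq_one_right (by rw [DihedralGroup.sr_mul_sr, sub_zero, ← DihedralGroup.one_def])

lemma inv_rk (k : ZMod p) : (DihedralGroup.r k)⁻¹ = DihedralGroup.r (-k) :=
  inv_eq_of_mul_eq_one_right
    (by rw [DihedralGroup.r_mul_r, add_neg_cancel, ← DihedralGroup.one_def])

lemma sr_conj_rot (k : ZMod p) :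
    DihedralGroup.sr 0 * DihedralGroup.r k * (DihedralGroup.sr 0)⁻¹ = (DihedralGroup.r k)⁻¹ := by
  rw [inv_sr0, inv_rk, DihedralGroup.sr_mul_r, DihedralGroup.sr_mul_sr]
  ring_nf

lemma inr_conj_inl (h : DihedralGroup p × DihedralGroup p) (c : Multiplicative (ZMod q)) :
    (SemidirectProduct.inr h : Wgrp p q) * SemidirectProduct.inl c *
      (SemidirectProduct.inr h)⁻¹ = SemidirectProduct.inl (Wact p q h c) := by
  rw [← map_inv]
  exact (SemidirectProduct.inl_aut h c).symm

lemma r_pow (k : ZMod p) (n : ℕ) : (DihedralGroup.r k) ^ n = DihedralGroup.r (n • k) := by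
  induction n with
  | zero => simp
  | succ m ih => rw [pow_succ, ih, DihedralGroup.r_mul_r, succ_nsmul]

lemma r_pow_self (k : ZMod p) : (DihedralGroup.r k) ^ p = 1 := by
  rw [r_pow, nsmul_eq_mul, ZMod.natCast_self, zero_mul, DihedralGroup.one_def]

lemma mult_pow_self (c : Multiplicative (ZMod q)) : c ^ q = 1 := by
  apply Multiplicative.toAdd.injective
  rw [toAdd_pow, nsmul_eq_mul, ZMod.natCast_self, zero_mul]
  rfl

lemma cV_pow (x : ↥(GGamma p q V R)) (v : V) (n : ℕ) : cV (x ^ n) v = (cV x v) ^ n :=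
  map_pow (vProj p q V R v) x n

lemma cE_pow (x : ↥(GGamma p q V R)) (r : R) (n : ℕ) : cE (x ^ n) r = (cE x r) ^ n :=
  map_pow (eProj p q V R r) x n

lemma glift_rot_mem (hpo : Odd p) (M : Subgroup ↥(GGamma p q V R))
    (hcomm : ∀ x y : ↥(GGamma p q V R), x * y * x⁻¹ * y⁻¹ ∈ M)
    (A : V → DihedralGroup p) (hA : ∀ v, ∃ k, A v = DihedralGroup.r k) :
    glift (R := R) (q := q) A ∈ M := by
  set h : ↥(GGamma p q V R) := glift (fun _ => DihedralGroup.sr 0) with hh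
  have hconj : h * glift A * h⁻¹ = (glift A)⁻¹ := by
    apply GG_ext
    · intro v
      obtain ⟨k, hk⟩ := hA v
      rw [cV_mul, cV_mul, cV_inv, cV_inv, hh, cV_glift, cV_glift, hk, sr_conj_rot]
    · intro r
      obtain ⟨k1, hk1⟩ := hA (r : V × V).1
      obtain ⟨k2, hk2⟩ := hA (r : V × V).2
      rw [cE_mul, cE_mul, cE_inv, cE_inv, hh, cE_glift, cE_glift, ← map_inv, ← map_mul,
        ← map_mul, ← map_inv, hk1, hk2]
      congr 1
      rw [Prod.inv_mk, Prod.mk_mul_mk, Prod.mk_mul_mk, Prod.inv_mk, sr_conj_rot, sr_conj_rot]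
  have h2 : glift (R := R) (q := q) A * glift A ∈ M := conj_comm_mem M hcomm hconj
  have h1 : (glift (R := R) (q := q) A) ^ p = 1 := by
    apply GG_ext
    · intro v
      obtain ⟨k, hk⟩ := hA v
      rw [cV_pow, cV_glift, cV_one, hk, r_pow_self]
    · intro r
      obtain ⟨k1, hk1⟩ := hA (r : V × V).1
      obtain ⟨k2, hk2⟩ := hA (r : V × V).2
      rw [cE_pow, cE_glift, cE_one, ← map_pow, hk1, hk2, Prod.pow_mk, r_pow_self, r_pow_self]
      exact map_one _
  exact odd_mem M hpo h2 h1

/-- The element of `G_Γ` with `C_q`-coordinate `c` at edge `r0` and all other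
coordinates trivial. -/
noncomputable def xre (p : ℕ) {q : ℕ} {V : Type} {R : Set (V × V)} (r0 : R)
    (c : Multiplicative (ZMod q)) : ↥(GGamma p q V R) :=
  ⟨(1, fun r => if r = r0 then inl c else 1), by
    intro r
    by_cases h : r = r0 <;> simp [h, rightHom_inr] <;> rfl⟩

lemma cV_xre (r0 : R) (c : Multiplicative (ZMod q)) (v : V) : cV (xre p r0 c) v = 1 := rfl

lemma cE_xre (r0 : R) (c : Multiplicative (ZMod q)) (r : R) :
    cE (xre p r0 c) r = if r = r0 then inl c else 1 := rfl

lemma xre_mem (hqo : Odd q) (hloop : ∀ v : V, (v, v) ∉ R) (M : Subgroup ↥(GGamma p q V R))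
    (hcomm : ∀ x y : ↥(GGamma p q V R), x * y * x⁻¹ * y⁻¹ ∈ M)
    (r0 : R) (c : Multiplicative (ZMod q)) : xre p r0 c ∈ M := by
  have hne : (r0 : V × V).2 ≠ (r0 : V × V).1 := by
    intro h
    apply hloop (r0 : V × V).1
    have h2 : ((r0 : V × V).1, (r0 : V × V).1) = (r0 : V × V) := Prod.ext rfl h.symm
    rw [h2]
    exact r0.2
  set g : ↥(GGamma p q V R) :=
    glift (fun w => if w = (r0 : V × V).1 then DihedralGroup.sr 0 else 1) with hg
  have hconj : g * xre p r0 c * g⁻¹ = (xre p r0 c)⁻¹ := by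
    apply GG_ext
    · intro v
      rw [cV_mul, cV_mul, cV_inv, cV_inv, cV_xre, mul_one, mul_inv_cancel, inv_one]
    · intro r
      rw [cE_mul, cE_mul, cE_inv, cE_inv, cE_xre]
      by_cases h : r = r0
      · subst h
        rw [if_pos rfl, hg, cE_glift, if_pos rfl, if_neg hne, inr_conj_inl, Wact_srone,
          map_inv]
      · rw [if_neg h, mul_one, mul_inv_cancel, inv_one]
  have h2 : xre p r0 c * xre p r0 c ∈ M := conj_comm_mem M hcomm hconj
  have h1 : (xre p r0 c) ^ q = 1 := by
    apply GG_ext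
    · intro v
      rw [cV_pow, cV_xre, one_pow, cV_one]
    · intro r
      rw [cE_pow, cE_xre, cE_one]
      by_cases h : r = r0
      · rw [if_pos h, ← map_pow, mult_pow_self]
        exact map_one _
      · rw [if_neg h, one_pow]
  exact odd_mem M hqo h2 h1

end Aux4
section Aux5
open SemidirectProduct
open scoped Classical

variable {p q : ℕ} {V : Type} {R : Set (V × V)}

lemma xre_ker (r0 : R) (c : Multiplicative (ZMod q)) :
    xre p r0 c ∈ (xiGamma p q V R).ker :=
  mem_ker_xi.mpr fun v => by rw [cV_xre]; exact map_one _

lemma ker_le_M (hpo : Odd p) (hqo : Odd q) (hloop : ∀ v : V, (v, v) ∉ R)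
    (M : Subgroup ↥(GGamma p q V R))
    (hcomm : ∀ x y : ↥(GGamma p q V R), x * y * x⁻¹ * y⁻¹ ∈ M)
    (FV : Finset V) (FR : Finset R) (hU : cylSub (p := p) (q := q) FV FR ≤ M) :
    (xiGamma p q V R).ker ≤ M := by
  intro s hs
  rw [mem_ker_xi] at hs
  set A : V → DihedralGroup p := fun v => cV s v with hA'
  have hA : ∀ v, ∃ k, A v = DihedralGroup.r k := fun v => rot_of_sign_one (hs v)
  have hsp : glift (R := R) (q := q) A ∈ M := glift_rot_mem hpo M hcomm A hA
  set t : ↥(GGamma p q V R) := s * (glift A)⁻¹ with ht'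
  have htv : ∀ v, cV t v = 1 := by
    intro v
    rw [ht', cV_mul, cV_inv, cV_glift, hA', mul_inv_cancel]
  have hte : ∀ r : R, (cE t r).right = 1 := by
    intro r
    rw [ht', cE_mul, cE_inv, cE_glift, mul_right, inv_right, right_inr, mem_GG, hA',
      mul_inv_cancel]
  set f : R → ↥(GGamma p q V R) := fun r0 => xre p r0 ((cE t r0).left) with hf'
  have hcommf : ((FR : Finset R) : Set R).Pairwise fun a b => Commute (f a) (f b) :=
    fun a _ b _ _ => ker_xi_comm (xre_ker a _) (xre_ker b _)
  set T : ↥(GGamma p q V R) := FR.noncommProd f hcommf with hT'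
  have hT : T ∈ M := Subgroup.noncommProd_mem M _ fun r0 _ => xre_mem hqo hloop M hcomm r0 _
  have hTv : ∀ v, cV T v = 1 := by
    intro v
    rw [hT', show cV (FR.noncommProd f hcommf) v
        = (vProj p q V R v) (FR.noncommProd f hcommf) from rfl,
      Finset.map_noncommProd]
    refine (Finset.noncommProd_eq_pow_card _ _ _ 1 ?_).trans (one_pow _)
    intro r0 _
    show cV (xre p r0 ((cE t r0).left)) v = 1
    exact cV_xre r0 _ v
  have hTe : ∀ r ∈ FR, cE T r = inl ((cE t r).left) := by
    intro r hr
    rw [hT', show cE (FR.noncommProd f hcommf) r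
        = (eProj p q V R r) (FR.noncommProd f hcommf) from rfl,
      ← Finset.noncommProd_erase_mul _ hr, map_mul]
    have h1 : ∀ (cc), (FR.erase r).noncommProd (fun i => (eProj p q V R r) (f i)) cc = 1 := by
      intro cc
      refine (Finset.noncommProd_eq_pow_card _ _ _ 1 ?_).trans (one_pow _)
      intro x hx
      show cE (xre p x ((cE t x).left)) r = 1
      rw [cE_xre, if_neg fun h => (Finset.mem_erase.mp hx).1 h.symm]
    have h1' : ∀ (cc), eProj p q V R r ((FR.erase r).noncommProd f cc) = 1 :=
      fun cc => (Finset.map_noncommProd _ _ cc _).trans (h1 _)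
    refine (congrArg (· * _) (h1' _)).trans ?_
    rw [one_mul]
    show cE (xre p r ((cE t r).left)) r = inl ((cE t r).left)
    rw [cE_xre, if_pos rfl]
  have htT : t * T⁻¹ ∈ M := by
    apply hU
    constructor
    · intro v _
      rw [cV_mul, cV_inv, htv v, hTv v, inv_one, one_mul]
    · intro r hr
      rw [cE_mul, cE_inv, hTe r hr, ← W_eq_inl (hte r), mul_inv_cancel]
  have hfin : s = ((t * T⁻¹) * T) * glift A := by
    rw [inv_mul_cancel_right, ht', inv_mul_cancel_right]
  rw [hfin]
  exact mul_mem (mul_mem htT hT) hsp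

end Aux5
open scoped Pointwise
/-- Let `Γ = (V, R)` be a graph and let `S = ker ξ_Γ` be the product of
the `p`-Sylow and `q`-Sylow subgroups of `G_Γ`.  If `N` is a proper closed normal subgroup
of `G_Γ`, then `NS` (the join `N ⊔ S`) is also a proper normal subgroup of `G_Γ`. -/
theorem statement_10 (p q : ℕ) (hp : p.Prime) (hq : q.Prime) (hpo : Odd p) (hqo : Odd q)
    (hpq : p ≠ q) (V : Type) (R : Set (V × V))
    (hloop : ∀ v : V, (v, v) ∉ R) (hor : ∀ a b : V, (a, b) ∈ R → (b, a) ∉ R)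
    (N : Subgroup ↥(GGamma p q V R)) [N.Normal]
    (hNc : IsClosed (N : Set ↥(GGamma p q V R))) (hNprop : N ≠ ⊤) :
    (N ⊔ (xiGamma p q V R).ker).Normal ∧ N ⊔ (xiGamma p q V R).ker ≠ ⊤ := by
  haveI hSn : ((xiGamma p q V R).ker).Normal := MonoidHom.normal_ker _
  refine ⟨Subgroup.sup_normal N _, ?_⟩
  intro htop
  obtain ⟨g₀, hg₀⟩ : ∃ g₀, g₀ ∉ N := by
    by_contra h
    push_neg at h
    exact hNprop ((Subgroup.eq_top_iff' N).mpr h)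
  have hopen : IsOpen ((↑N : Set ↥(GGamma p q V R))ᶜ) := hNc.isOpen_compl
  have hind : Topology.IsInducing
      ((↑) : ↥(GGamma p q V R) → (V → DihedralGroup p) × (R → Wgrp p q)) :=
    ⟨rfl⟩
  rw [hind.isOpen_iff] at hopen
  obtain ⟨O, hO, hOeq⟩ := hopen
  have hg₀O : (g₀ : (V → DihedralGroup p) × (R → Wgrp p q)) ∈ O := by
    have : g₀ ∈ ((↑N : Set ↥(GGamma p q V R))ᶜ) := hg₀
    rw [← hOeq] at this
    exact this
  rw [isOpen_prod_iff] at hO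
  obtain ⟨u, w, huo, hwo, hgu, hgw, huw⟩ := hO g₀.val.1 g₀.val.2
    (by rw [Prod.mk.eta]; exact hg₀O)
  rw [isOpen_pi_iff] at huo hwo
  obtain ⟨FV, uu, hFV, hVsub⟩ := huo _ hgu
  obtain ⟨FR, ww, hFR, hRsub⟩ := hwo _ hgw
  set C := cylSub (p := p) (q := q) FV FR with hC
  haveI : C.Normal := cylSub_normal FV FR
  set M := N ⊔ C with hM
  haveI hMn : M.Normal := Subgroup.sup_normal N C
  have hg₀M : g₀ ∉ M := by
    intro hm
    have hm' : g₀ ∈ ((N : Set ↥(GGamma p q V R)) * (C : Set ↥(GGamma p q V R))) := by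
      rw [← Subgroup.mul_normal N C]
      exact hm
    obtain ⟨n, hn, u', hu', hnu⟩ := hm'
    have hn' : n = g₀ * u'⁻¹ := by rw [← hnu, mul_inv_cancel_right]
    have h1 : n.val.1 ∈ (↑FV : Set V).pi uu := by
      intro a ha
      have hcv : cV n a = cV g₀ a := by
        rw [hn', cV_mul, cV_inv, hu'.1 a ha, inv_one, mul_one]
      show cV n a ∈ uu a
      rw [hcv]
      exact (hFV a ha).2
    have h2 : n.val.2 ∈ (↑FR : Set _).pi ww := by
      intro a ha
      have hce : cE n a = cE g₀ a := by
        rw [hn', cE_mul, cE_inv, hu'.2 a ha, inv_one, mul_one]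
      show cE n a ∈ ww a
      rw [hce]
      exact (hFR a ha).2
    have hmem : n.val ∈ O := by
      apply huw
      exact Set.mem_prod.mpr ⟨hVsub h1, hRsub h2⟩
    have : n ∈ ((↑N : Set ↥(GGamma p q V R))ᶜ) := by rw [← hOeq]; exact hmem
    exact this hn
  have hMS : M ⊔ (xiGamma p q V R).ker = ⊤ := by
    apply le_antisymm le_top
    rw [← htop]
    exact sup_le_sup_right le_sup_left _
  have hcomm : ∀ x y : ↥(GGamma p q V R), x * y * x⁻¹ * y⁻¹ ∈ M := by
    have hdec : ∀ x : ↥(GGamma p q V R),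
        ∃ m ∈ M, ∃ s' ∈ (xiGamma p q V R).ker, m * s' = x := by
      intro x
      have hx : x ∈ (↑(M ⊔ (xiGamma p q V R).ker) : Set ↥(GGamma p q V R)) := by
        rw [hMS]
        trivial
      rw [Subgroup.mul_normal] at hx
      exact hx
    intro x y
    obtain ⟨m1, hm1, s1, hs1, hx⟩ := hdec x
    obtain ⟨m2, hm2, s2, hs2, hy⟩ := hdec y
    rw [← QuotientGroup.eq_one_iff]
    have e1 : ((x : ↥(GGamma p q V R)) : ↥(GGamma p q V R) ⧸ M) = ((s1 : ↥(GGamma p q V R)) : ↥(GGamma p q V R) ⧸ M) := by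
      rw [← hx, QuotientGroup.mk_mul, (QuotientGroup.eq_one_iff m1).mpr hm1, one_mul]
    have e2 : ((y : ↥(GGamma p q V R)) : ↥(GGamma p q V R) ⧸ M) = ((s2 : ↥(GGamma p q V R)) : ↥(GGamma p q V R) ⧸ M) := by
      rw [← hy, QuotientGroup.mk_mul, (QuotientGroup.eq_one_iff m2).mpr hm2, one_mul]
    have hcs : s1 * s2 = s2 * s1 := ker_xi_comm hs1 hs2
    simp only [QuotientGroup.mk_mul, QuotientGroup.mk_inv, e1, e2]
    rw [← QuotientGroup.mk_mul, hcs, QuotientGroup.mk_mul]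
    group
  have hker : (xiGamma p q V R).ker ≤ M :=
    ker_le_M hpo hqo hloop M hcomm FV FR le_sup_right
  have hMtop : M = ⊤ := by rw [← hMS, sup_eq_left.mpr hker]
  exact hg₀M (hMtop ▸ Subgroup.mem_top g₀)
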